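/- Let E be a finite subset of ℤ³ and K, W positive naturals. Assume |φ_i(E)| ≤ W, |φ_{i,j}(E)| ≤ K, and |φ_{i,k}(E)| ≤ K, where φ_i, φ_{i,j}, φ_{i,k} are the projections onto the first coordinate, first two coordinates, and first-and-third coordinates respectively. Further assume that for every (j₀,k₀) ∈ φ_{j,k}(E), the fiber {i | (i,j₀,k₀) ∈ E} has at least W elements. Then |E| ≤ K²/W. -/

import Mathlib

theorem stmt_4 (E : Finset (ℤ × ℤ × ℤ)) (K W : ℕ) (hK : 0 < K) (hWpos : 0 < W)
    (hi : (E.image (fun p => p.1)).card ≤ W)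
    (hij : (E.image (fun p => (p.1, p.2.1))).card ≤ K)
    (hik : (E.image (fun p => (p.1, p.2.2))).card ≤ K)
    (hfib : ∀ q ∈ E.image (fun p => p.2), W ≤
      ((E.filter (fun p => p.2 = q)).image (fun p => p.1)).card) :
    E.card ≤ K ^ 2 / W := by
  classical
  set D : Finset ((_ : ℤ × ℤ × ℤ) × ℤ) :=
    E.sigma (fun p => (E.filter (fun q => q.2 = p.2)).image Prod.fst) with hD
  have h1 : W * E.card ≤ D.card := by
    rw [hD, Finset.card_sigma]
    calc W * E.card = ∑ _p ∈ E, W := by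
          rw [Finset.sum_const, smul_eq_mul, mul_comm]
      _ ≤ ∑ p ∈ E, ((E.filter (fun q => q.2 = p.2)).image Prod.fst).card := by
          apply Finset.sum_le_sum
          intro p hp
          exact hfib p.2 (Finset.mem_image_of_mem _ hp)
  have h2 : D.card ≤ K * K := by
    have := Finset.card_le_card_of_injOn
      (f := fun x : (_ : ℤ × ℤ × ℤ) × ℤ => ((x.1.1, x.1.2.1), (x.2, x.1.2.2)))
      (s := D)
      (t := (E.image (fun p => (p.1, p.2.1))) ×ˢ (E.image (fun p => (p.1, p.2.2))))
      ?_ ?_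
    · refine this.trans ?_
      rw [Finset.card_product]
      exact Nat.mul_le_mul hij hik
    · rintro ⟨p, i⟩ hx
      rw [hD, Finset.mem_coe, Finset.mem_sigma] at hx
      obtain ⟨hp, hi'⟩ := hx
      simp only [Finset.mem_image, Finset.mem_filter] at hi'
      obtain ⟨q, ⟨hqE, hq2⟩, hq1⟩ := hi'
      rw [Finset.mem_coe, Finset.mem_product]
      constructor
      · exact Finset.mem_image_of_mem _ hp
      · simp only [Finset.mem_image]
        exact ⟨q, hqE, by rw [hq1, hq2]⟩
    · rintro ⟨p, i⟩ _ ⟨p', i'⟩ _ h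
      simp only [Prod.mk.injEq] at h
      obtain ⟨⟨h1, h2⟩, h3, h4⟩ := h
      have hpp : p = p' := by
        apply Prod.ext h1
        exact Prod.ext h2 h4
      subst hpp
      simp [h3]
  have h3 : E.card * W ≤ K ^ 2 := by
    rw [mul_comm, pow_two]
    exact h1.trans h2
  exact (Nat.le_div_iff_mul_le hWpos).mpr h3
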